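/- Let M be an n×n integer matrix with determinant ±1 (i.e., M ∈ GLₙ(ℤ)). Suppose that for every C there exists an integer k > C and a matrix R_k ∈ GLₙ(ℤ) with R_k^k = M. Then every complex eigenvalue of M is a root of unity. -/

import Mathlib

open Matrix Polynomial

lemma aux_mem_spectrum_iff_isRoot {K : Type*} [Field K] {m : Type*} [Fintype m] [DecidableEq m]
    (A : Matrix m m K) (μ : K) : μ ∈ spectrum K A ↔ A.charpoly.IsRoot μ := by
  have heval : A.charpoly.eval μ = (Matrix.scalar m μ - A).det := by
    rw [Matrix.charpoly, _root_.eval_det, matPolyEquiv_charmatrix]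
    simp
  have halg : (algebraMap K (Matrix m m K)) μ = Matrix.scalar m μ := rfl
  rw [spectrum.mem_iff, Polynomial.IsRoot, heval, halg,
    Matrix.isUnit_iff_isUnit_det, isUnit_iff_ne_zero, not_ne_iff]

theorem stmt_7 (n : ℕ) (M : GL (Fin n) ℤ)
    (h : ∀ C : ℕ, ∃ k : ℕ, C < k ∧ ∃ R : GL (Fin n) ℤ, R ^ k = M) :
    ∀ μ : ℂ,
      (((M : Matrix (Fin n) (Fin n) ℤ).map ((↑) : ℤ → ℂ)).charpoly).IsRoot μ →
      ∃ k : ℕ, 0 < k ∧ μ ^ k = 1 := by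
  classical
  intro μ hμroot
  set f : ℤ →+* ℂ := Int.castRingHom ℂ with hf
  set Aℂ : Matrix (Fin n) (Fin n) ℂ := (M : Matrix (Fin n) (Fin n) ℤ).map f with hAC
  have hAC' : (M : Matrix (Fin n) (Fin n) ℤ).map ((↑) : ℤ → ℂ) = Aℂ := rfl
  rw [hAC'] at hμroot
  have hμ : μ ∈ spectrum ℂ Aℂ := (aux_mem_spectrum_iff_isRoot _ _).mpr hμroot
  -- μ ≠ 0
  have hdet : (M : Matrix (Fin n) (Fin n) ℤ).det ≠ 0 :=
    ((Matrix.isUnit_iff_isUnit_det _).mp M.isUnit).ne_zero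
  have hdetC : Aℂ.det ≠ 0 := by
    have hdc : Aℂ.det = (((M : Matrix (Fin n) (Fin n) ℤ).det : ℤ) : ℂ) := by
      rw [hAC, ← RingHom.mapMatrix_apply, ← RingHom.map_det]; rfl
    rw [hdc]
    exact_mod_cast hdet
  have hμne : μ ≠ 0 := by
    rintro rfl
    have h1 : Aℂ.charpoly.coeff 0 = 0 := by
      rwa [Polynomial.coeff_zero_eq_eval_zero]
    exact hdetC (by rw [Matrix.det_eq_sign_charpoly_coeff, h1, mul_zero])
  -- bound on the roots of charpoly of Aℂ
  set B : ℝ := (Aℂ.charpoly.roots.map (fun z => ‖z‖)).sum with hB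
  have hBroot : ∀ z ∈ spectrum ℂ Aℂ, ‖z‖ ≤ B := by
    intro z hz
    have hzr : z ∈ Aℂ.charpoly.roots :=
      (Polynomial.mem_roots (Matrix.charpoly_monic Aℂ).ne_zero).mpr
        ((aux_mem_spectrum_iff_isRoot _ _).mp hz)
    exact Multiset.single_le_sum
      (fun x hx => by obtain ⟨y, -, rfl⟩ := Multiset.mem_map.mp hx; exact norm_nonneg y)
      _ (Multiset.mem_map_of_mem _ hzr)
  set c : ℝ := max B 1 with hc
  set b : ℝ := max c 1 ^ n * (n.choose (n / 2) : ℝ) with hb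
  set C0 : ℤ := ⌈b⌉ with hC0
  -- the finite set of candidate roots
  set T : Set ℂ := ⋃ (q : ℤ[X]) (_ : q.natDegree ≤ n ∧ ∀ i, q.coeff i ∈ Set.Icc (-C0) C0),
      (((q.map f).roots.toFinset : Finset ℂ) : Set ℂ) with hT
  have hTfin : T.Finite := Polynomial.bUnion_roots_finite f n (Set.finite_Icc (-C0) C0)
  -- key claim
  set K : Set ℕ := {k | 0 < k ∧ ∃ R : GL (Fin n) ℤ, R ^ k = M} with hK
  have claim : ∀ k ∈ K, ∃ ρ, ρ ∈ T ∧ ρ ^ k = μ := by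
    rintro k ⟨hkpos, R, hR⟩
    set q : ℤ[X] := Matrix.charpoly (R : Matrix (Fin n) (Fin n) ℤ) with hq
    set Rℂ : Matrix (Fin n) (Fin n) ℂ := (R : Matrix (Fin n) (Fin n) ℤ).map f with hRC
    have hRpow : Rℂ ^ k = Aℂ := by
      rw [hRC, hAC, ← RingHom.mapMatrix_apply, ← RingHom.mapMatrix_apply, ← map_pow,
        ← Units.val_pow_eq_pow_val, hR]
    have hcharR : Rℂ.charpoly = q.map f := Matrix.charpoly_map _ f
    have hspec : spectrum ℂ Aℂ = (· ^ k) '' spectrum ℂ Rℂ := by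
      rw [← hRpow]; exact spectrum.map_pow_of_pos Rℂ hkpos
    -- all roots of q.map f are bounded by c
    have hroots : ∀ z ∈ (q.map f).roots, ‖z‖ ≤ c := by
      intro z hz
      have hzs : z ∈ spectrum ℂ Rℂ := by
        rw [aux_mem_spectrum_iff_isRoot, hcharR]
        exact Polynomial.isRoot_of_mem_roots hz
      have hzk : z ^ k ∈ spectrum ℂ Aℂ := by rw [hspec]; exact ⟨z, hzs, rfl⟩
      have hzkB : ‖z‖ ^ k ≤ B := by
        have := hBroot _ hzk; rwa [norm_pow] at this
      rcases le_or_gt ‖z‖ 1 with h1 | h1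
      · exact h1.trans (le_max_right _ _)
      · have : ‖z‖ ≤ ‖z‖ ^ k := le_self_pow₀ h1.le hkpos.ne'
        exact (this.trans hzkB).trans (le_max_left _ _)
    -- coefficient bounds
    have hdeg : q.natDegree = n := by
      rw [hq, Matrix.charpoly_natDegree_eq_dim, Fintype.card_fin]
    have hsplit : (q.map f).Splits :=
      IsAlgClosed.splits (q.map f)
    have hcoeff : ∀ i, q.coeff i ∈ Set.Icc (-C0) C0 := by
      intro i
      have hbd := Polynomial.coeff_bdd_of_roots_le f (Matrix.charpoly_monic _)
        hsplit hdeg.le hroots i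
      have hnorm : ‖(q.map f).coeff i‖ = |(q.coeff i : ℝ)| := by
        rw [Polynomial.coeff_map]
        simp [hf]
      rw [hnorm] at hbd
      have hble : |(q.coeff i : ℝ)| ≤ (C0 : ℝ) := hbd.trans (Int.le_ceil b)
      rw [Set.mem_Icc, ← abs_le]
      exact_mod_cast (by rwa [← Int.cast_abs] at hble : ((|q.coeff i| : ℤ) : ℝ) ≤ (C0 : ℝ))
    -- produce ρ
    have hμ' : μ ∈ (· ^ k) '' spectrum ℂ Rℂ := by rw [← hspec]; exact hμ
    obtain ⟨ρ, hρs, hρk⟩ := hμ'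
    refine ⟨ρ, ?_, hρk⟩
    rw [hT]
    apply Set.mem_iUnion₂.mpr
    refine ⟨q, ⟨hdeg.le, hcoeff⟩, ?_⟩
    simp only [Finset.coe_sort_coe, Multiset.mem_toFinset, Finset.mem_coe]
    rw [Polynomial.mem_roots']
    exact ⟨by rw [← hcharR]; exact (Matrix.charpoly_monic Rℂ).ne_zero, by
      rw [← hcharR]; exact (aux_mem_spectrum_iff_isRoot _ _).mp hρs⟩
  -- K is infinite
  have hKinf : K.Infinite := by
    intro hfin
    obtain ⟨m, hm⟩ := hfin.bddAbove
    obtain ⟨k, hk, R, hR⟩ := h m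
    exact absurd (hm ⟨by omega, R, hR⟩) (not_le.mpr hk)
  -- pigeonhole
  set g : ℕ → ℂ := fun k => if hk : k ∈ K then (claim k hk).choose else 0 with hg
  have hmap : Set.MapsTo g K T := by
    intro k hk
    simp only [hg, dif_pos hk]
    exact (claim k hk).choose_spec.1
  obtain ⟨k1, hk1, k2, hk2, hne, heq⟩ := hKinf.exists_ne_map_eq_of_mapsTo hmap hTfin
  have main : ∀ k1 k2, k1 ∈ K → k2 ∈ K → k1 < k2 → g k1 = g k2 → ∃ k, 0 < k ∧ μ ^ k = 1 := by
    intro k1 k2 hk1 hk2 hlt heq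
    have h1 : g k1 ^ k1 = μ := by
      simp only [hg, dif_pos hk1]; exact (claim k1 hk1).choose_spec.2
    have h2 : g k1 ^ k2 = μ := by
      rw [heq]; simp only [hg, dif_pos hk2]; exact (claim k2 hk2).choose_spec.2
    have hρne : g k1 ≠ 0 := fun h0 => hμne (by rw [← h1, h0, zero_pow hk1.1.ne'])
    have hkey : g k1 ^ (k2 - k1) = 1 := by
      have h3 : g k1 ^ (k2 - k1) * g k1 ^ k1 = 1 * g k1 ^ k1 := by
        rw [one_mul, ← pow_add, Nat.sub_add_cancel hlt.le, h2, h1]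
      exact mul_right_cancel₀ (pow_ne_zero _ hρne) h3
    refine ⟨k2 - k1, by omega, ?_⟩
    rw [← h1, ← pow_mul, mul_comm, pow_mul, hkey, one_pow]
  rcases hne.lt_or_gt with hlt | hlt
  · exact main k1 k2 hk1 hk2 hlt heq
  · exact main k2 k1 hk2 hk1 hlt heq.symm
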